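/- Let n_1, ..., n_k be positive reals summing to n, and let 0 < a < 1 with p_i = n_i/n. Suppose p_1, ..., p_t < a ≤ p_{t+1}, ..., p_k. Then ∑_{i=1}^k H(p_i) ≥ ((p_1 + ... + p_t + a(k - t - 1))/(1 - a)) · log₂(1/a), where H(p) = -p log₂ p. -/

import Mathlib

open Finset Real

lemma card_filter_lt_fin (k t : ℕ) (ht : t ≤ k) :
    (Finset.univ.filter (fun i : Fin k => (i : ℕ) < t)).card = t := by
  rw [Finset.card_filter]
  rw [Fin.sum_univ_eq_sum_range (fun j => if j < t then 1 else 0)]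
  rw [← Finset.card_filter]
  have : (Finset.range k).filter (fun j => j < t) = Finset.range t := by
    ext x; simp [Finset.mem_range]; omega
  rw [this, Finset.card_range]

lemma small_bound {p a : ℝ} (hp : 0 < p) (hpa : p < a) :
    p * Real.logb 2 (1 / a) ≤ -p * Real.logb 2 p := by
  have h : Real.logb 2 p ≤ Real.logb 2 a := Real.logb_le_logb_of_le one_lt_two hp hpa.le
  have h2 : Real.logb 2 (1 / a) = -Real.logb 2 a := by
    rw [one_div, Real.logb_inv]
  nlinarith [h, hp]

lemma big_bound {p a : ℝ} (ha0 : 0 < a) (ha1 : a < 1) (hap : a ≤ p) (hp1 : p ≤ 1) :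
    (1 - p) / (1 - a) * (a * Real.logb 2 (1 / a)) ≤ -p * Real.logb 2 p := by
  set lam := (1 - p) / (1 - a) with hlam
  set mu := (p - a) / (1 - a) with hmu
  have h1a : (0:ℝ) < 1 - a := by linarith
  have hlam0 : 0 ≤ lam := div_nonneg (by linarith) h1a.le
  have hmu0 : 0 ≤ mu := div_nonneg (by linarith) h1a.le
  have hsum : lam + mu = 1 := by
    rw [hlam, hmu, ← add_div]
    rw [show (1 - p) + (p - a) = 1 - a by ring, div_self h1a.ne']
  have key := Real.concaveOn_negMulLog.2 (Set.mem_Ici.mpr ha0.le)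
    (Set.mem_Ici.mpr (zero_le_one)) hlam0 hmu0 hsum
  have hcomb : lam * a + mu * 1 = p := by
    rw [hlam, hmu]; field_simp; ring
  rw [smul_eq_mul, smul_eq_mul, smul_eq_mul, smul_eq_mul, hcomb,
    Real.negMulLog_one, mul_zero, add_zero] at key
  have hlog2 : (0:ℝ) < Real.log 2 := Real.log_pos one_lt_two
  have e1 : a * Real.logb 2 (1 / a) = Real.negMulLog a / Real.log 2 := by
    rw [Real.negMulLog, Real.logb, Real.log_div one_ne_zero (ne_of_gt ha0), Real.log_one]
    ring
  have e2 : -p * Real.logb 2 p = Real.negMulLog p / Real.log 2 := by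
    rw [Real.negMulLog, Real.logb]; ring
  rw [e1, e2, ← mul_div_assoc]
  exact (div_le_div_iff_of_pos_right hlog2).mpr key

/-- Petrov's concavity argument: with `p i = ν i / n`, `p i < a` for `i < t` and
`a ≤ p i` for `t ≤ i`, we have
`∑ H(p i) ≥ ((p 1 + ⋯ + p t + a (k - t - 1)) / (1 - a)) · log₂ (1/a)`. -/
theorem petrov_concavity_step (k t : ℕ) (ht : t ≤ k) (ν : Fin k → ℝ)
    (hν : ∀ i, 0 < ν i) (n : ℝ) (hn : n = ∑ i, ν i)
    (a : ℝ) (ha0 : 0 < a) (ha1 : a < 1)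
    (hsmall : ∀ i : Fin k, (i : ℕ) < t → ν i / n < a)
    (hbig : ∀ i : Fin k, t ≤ (i : ℕ) → a ≤ ν i / n) :
    ∑ i, -(ν i / n) * Real.logb 2 (ν i / n) ≥
      ((∑ i ∈ Finset.univ.filter (fun i : Fin k => (i : ℕ) < t), ν i / n)
          + a * ((k : ℝ) - t - 1)) / (1 - a) * Real.logb 2 (1 / a) := by
  have h1a : (0:ℝ) < 1 - a := by linarith
  have hL : 0 ≤ Real.logb 2 (1 / a) := by
    apply Real.logb_nonneg one_lt_two
    rw [le_div_iff₀ ha0]; linarith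
  by_cases hk : k = 0
  · subst hk
    have ht0 : t = 0 := Nat.le_zero.mp ht
    subst ht0
    simp only [Finset.univ_eq_empty, Finset.filter_empty, Finset.sum_empty,
      Nat.cast_zero, zero_add, Finset.sum_empty]
    have h : (a * ((0:ℝ) - 0 - 1)) / (1 - a) = -(a / (1 - a)) := by ring
    rw [h]
    have : 0 ≤ a / (1 - a) * Real.logb 2 (1 / a) :=
      mul_nonneg (div_nonneg ha0.le h1a.le) hL
    nlinarith [this]
  · have hkpos : 0 < k := Nat.pos_of_ne_zero hk
    have hn0 : 0 < n := by
      rw [hn]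
      exact Finset.sum_pos (fun i _ => hν i) ⟨⟨0, hkpos⟩, Finset.mem_univ _⟩
    have hp0 : ∀ i, 0 < ν i / n := fun i => div_pos (hν i) hn0
    have hp1 : ∀ i : Fin k, ν i / n ≤ 1 := by
      intro i
      rw [div_le_one hn0, hn]
      exact Finset.single_le_sum (fun j _ => (hν j).le) (Finset.mem_univ i)
    have hPsum : ∑ i, ν i / n = 1 := by
      rw [← Finset.sum_div, ← hn, div_self hn0.ne']
    set L := Real.logb 2 (1 / a) with hLdef
    set S := Finset.univ.filter (fun i : Fin k => (i : ℕ) < t) with hS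
    set B := Finset.univ.filter (fun i : Fin k => ¬ (i : ℕ) < t) with hB
    have hsplit : ∀ f : Fin k → ℝ, ∑ i, f i = (∑ i ∈ S, f i) + ∑ i ∈ B, f i :=
      fun f => (Finset.sum_filter_add_sum_filter_not Finset.univ _ f).symm
    have hcardS : S.card = t := card_filter_lt_fin k t ht
    have hcardB : (B.card : ℝ) = (k : ℝ) - t := by
      have htot : S.card + B.card = k := by
        rw [hS, hB, Finset.card_filter_add_card_filter_not, Finset.card_univ,
          Fintype.card_fin]
      have hB' : B.card = k - t := by omega
      rw [hB', Nat.cast_sub ht]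
    have bound1 : ∑ i ∈ S, (ν i / n) * L ≤ ∑ i ∈ S, -(ν i / n) * Real.logb 2 (ν i / n) := by
      apply Finset.sum_le_sum
      intro i hi
      rw [hS, Finset.mem_filter] at hi
      exact small_bound (hp0 i) (hsmall i hi.2)
    have bound2 : ∑ i ∈ B, (1 - ν i / n) / (1 - a) * (a * L) ≤
        ∑ i ∈ B, -(ν i / n) * Real.logb 2 (ν i / n) := by
      apply Finset.sum_le_sum
      intro i hi
      rw [hB, Finset.mem_filter] at hi
      exact big_bound ha0 ha1 (hbig i (Nat.le_of_not_lt hi.2)) (hp1 i)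
    have hBsum : ∑ i ∈ B, ν i / n = 1 - ∑ i ∈ S, ν i / n := by
      have := hsplit (fun i => ν i / n)
      rw [hPsum] at this
      linarith
    have e3 : ∑ i ∈ B, (1 - ν i / n) / (1 - a) * (a * L) =
        (((k : ℝ) - t) - (1 - ∑ i ∈ S, ν i / n)) * (a * L / (1 - a)) := by
      have : ∀ i : Fin k, (1 - ν i / n) / (1 - a) * (a * L) =
          (1 - ν i / n) * (a * L / (1 - a)) := by intro i; ring
      rw [Finset.sum_congr rfl (fun i _ => this i), ← Finset.sum_mul,
        Finset.sum_sub_distrib, Finset.sum_const, nsmul_eq_mul, mul_one, hBsum, hcardB]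
    rw [ge_iff_le, hsplit (fun i => -(ν i / n) * Real.logb 2 (ν i / n))]
    have final : ((∑ i ∈ S, ν i / n) + a * ((k : ℝ) - t - 1)) / (1 - a) * L =
        (∑ i ∈ S, (ν i / n) * L) +
          (((k : ℝ) - t) - (1 - ∑ i ∈ S, ν i / n)) * (a * L / (1 - a)) := by
      rw [← Finset.sum_mul]
      field_simp
      ring
    rw [final]
    have := e3 ▸ bound2
    linarith [bound1, this]
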